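/- For every integer m ≥ 1 and every natural number s, the following are equivalent: (i) (0,m) ∼_H (2^s − 1, m); (ii) 2^m − 1 divides 2^s − 1; (iii) m divides s. -/

import Mathlib

/-- The ring of dyadic rationals `ℤ[1/2]`, as a subring of `ℚ`. -/
def DyadicQ : Subring ℚ := Subring.closure {(2:ℚ)⁻¹}

lemma DyadicQ.two_mem : (2:ℚ) ∈ DyadicQ := by
  have := add_mem (Subring.one_mem DyadicQ) (Subring.one_mem DyadicQ)
  rw [one_add_one_eq_two] at this
  exact this

lemma DyadicQ.half_mem : (2:ℚ)⁻¹ ∈ DyadicQ := Subring.subset_closure rfl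

/-- `2` as a unit of `ℤ[1/2]`. -/
def DyadicQ.two : DyadicQˣ where
  val := ⟨2, DyadicQ.two_mem⟩
  inv := ⟨(2:ℚ)⁻¹, DyadicQ.half_mem⟩
  val_inv := by ext; norm_num
  inv_val := by ext; norm_num

/-- The powers `2^m` for `m : ℤ`, as elements of `ℤ[1/2]`. -/
def pow2 (m : ℤ) : DyadicQ := ((DyadicQ.two ^ m : DyadicQˣ) : DyadicQ)

lemma pow2_add (m q : ℤ) : pow2 (m + q) = pow2 m * pow2 q := by
  simp [pow2, zpow_add]

lemma pow2_zero : pow2 0 = 1 := by simp [pow2]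

/-- The group `H = ℤ[1/2] ⋊ ℤ`, where `ℤ` acts by powers of `2`;
multiplication is `(r,m)·(s,q) = (r + 2^m·s, m+q)`. -/
@[ext] structure Hgrp where
  r : DyadicQ
  m : ℤ

instance : Mul Hgrp := ⟨fun x y => ⟨x.r + pow2 x.m * y.r, x.m + y.m⟩⟩
instance : One Hgrp := ⟨⟨0, 0⟩⟩
instance : Inv Hgrp := ⟨fun x => ⟨-(pow2 (-x.m) * x.r), -x.m⟩⟩

lemma Hgrp.mul_def (x y : Hgrp) : x * y = ⟨x.r + pow2 x.m * y.r, x.m + y.m⟩ := rfl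
lemma Hgrp.one_def : (1 : Hgrp) = ⟨0, 0⟩ := rfl
lemma Hgrp.inv_def (x : Hgrp) : x⁻¹ = ⟨-(pow2 (-x.m) * x.r), -x.m⟩ := rfl

instance : Group Hgrp where
  mul_assoc a b c := by
    simp only [Hgrp.mul_def, Hgrp.mk.injEq, pow2_add]
    constructor <;> ring
  one_mul a := by
    obtain ⟨r, m⟩ := a
    simp only [Hgrp.one_def, Hgrp.mul_def, Hgrp.mk.injEq, pow2_zero]
    constructor <;> ring
  mul_one a := by
    obtain ⟨r, m⟩ := a
    simp only [Hgrp.one_def, Hgrp.mul_def, Hgrp.mk.injEq, pow2_zero]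
    constructor <;> ring
  inv_mul_cancel a := by
    simp only [Hgrp.inv_def, Hgrp.mul_def, Hgrp.one_def, Hgrp.mk.injEq]
    constructor <;> ring

/-- Conjugacy in `H`. -/
def conjH (x y : Hgrp) : Prop := ∃ z : Hgrp, z * x * z⁻¹ = y

/-- The element `a = (1,0)` of `H`. -/
def aH : Hgrp := ⟨1, 0⟩
/-- The element `t = (0,1)` of `H`. -/
def tH : Hgrp := ⟨0, 1⟩
lemma aH_zpow (n : ℤ) : aH ^ n = Hgrp.mk (n : DyadicQ) 0 := by
  induction n using Int.induction_on with
  | zero => simp [Hgrp.one_def]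
  | succ k ih =>
      rw [zpow_add_one, ih]
      simp only [aH, Hgrp.mul_def, Hgrp.mk.injEq, pow2_zero]
      push_cast
      constructor <;> first | ring | (simp; done) | (simp; ring) | (simp [sub_eq_add_neg])
  | pred k ih =>
      rw [zpow_sub_one, ih]
      simp only [aH, Hgrp.inv_def, Hgrp.mul_def, Hgrp.mk.injEq, pow2_zero, neg_zero]
      push_cast
      constructor <;> first | ring | (simp; done) | (simp; ring) | (simp [sub_eq_add_neg])

lemma tH_zpow (n : ℤ) : tH ^ n = Hgrp.mk 0 n := by
  induction n using Int.induction_on with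
  | zero => simp [Hgrp.one_def]
  | succ k ih =>
      rw [zpow_add_one, ih]
      simp [tH, Hgrp.mul_def]
  | pred k ih =>
      rw [zpow_sub_one, ih]
      simp only [tH, Hgrp.inv_def, Hgrp.mul_def, Hgrp.mk.injEq]
      constructor <;> ring

lemma aH_zpow_injective : Function.Injective fun n : ℤ => aH ^ n := by
  intro x y h
  simp only [aH_zpow, Hgrp.mk.injEq] at h
  have : ((x : DyadicQ) : ℚ) = ((y : DyadicQ) : ℚ) := by rw [h.1]
  simpa using this

lemma tH_zpow_injective : Function.Injective fun n : ℤ => tH ^ n := by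
  intro x y h
  simp only [tH_zpow, Hgrp.mk.injEq] at h
  exact h.2

/-- The homomorphism `ℤ →* G` given by powers of `g`. -/
def zintHom {G : Type*} [Group G] (g : G) : Multiplicative ℤ →* G where
  toFun n := g ^ (Multiplicative.toAdd n)
  map_one' := by simp
  map_mul' x y := by simp [zpow_add]

/-- For `g` with `n ↦ g ^ n` injective, `⟨g⟩ ≅ ℤ`. -/
noncomputable def zpowMulEquiv {G : Type*} [Group G] (g : G)
    (hg : Function.Injective fun n : ℤ => g ^ n) :
    Multiplicative ℤ ≃* Subgroup.zpowers g := by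
  refine MulEquiv.ofBijective
    ((zintHom g).codRestrict (Subgroup.zpowers g).toSubmonoid
      (fun n => Subgroup.mem_zpowers_iff.mpr ⟨Multiplicative.toAdd n, rfl⟩)) ⟨?_, ?_⟩
  · intro x y h
    have : g ^ (Multiplicative.toAdd x) = g ^ (Multiplicative.toAdd y) :=
      congrArg Subtype.val h
    exact hg this
  · rintro ⟨x, hx⟩
    obtain ⟨n, hn⟩ := Subgroup.mem_zpowers_iff.mp hx
    exact ⟨Multiplicative.ofAdd n, Subtype.ext hn⟩

/-- The associated isomorphism `⟨a⟩ ≅ ⟨t⟩`, `a ↦ t`, of the HNN extension defining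
the Baumslag group. -/
noncomputable def φBS : Subgroup.zpowers aH ≃* Subgroup.zpowers tH :=
  (zpowMulEquiv aH aH_zpow_injective).symm.trans (zpowMulEquiv tH tH_zpow_injective)

/-- The Baumslag group `G(1,2)`, as HNN extension of `H = BS(1,2)` with stable letter `b`,
associated subgroups `⟨a⟩` and `⟨t⟩`, and associated isomorphism `a ↦ t`. -/
noncomputable abbrev BG := HNNExtension Hgrp (Subgroup.zpowers aH) (Subgroup.zpowers tH) φBS

/-- The embedding of `H` into the Baumslag group. -/
noncomputable def ι : Hgrp →* BG := HNNExtension.of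

/-- The stable letter `b` of the Baumslag group. -/
noncomputable def bBG : BG := HNNExtension.t

/-- Conjugacy in the Baumslag group `G(1,2)`. -/
def conjBG (x y : BG) : Prop := ∃ z : BG, z * x * z⁻¹ = y

/-- The (candidate) set of dyadic rationals, `n / 2^k`. -/
def Sdy : Subring ℚ where
  carrier := {q : ℚ | ∃ n : ℤ, ∃ k : ℕ, q = n / 2 ^ k}
  zero_mem' := ⟨0, 0, by norm_num⟩
  one_mem' := ⟨1, 0, by norm_num⟩
  add_mem' := by
    rintro a b ⟨n, k, rfl⟩ ⟨n', k', rfl⟩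
    refine ⟨n * 2 ^ k' + n' * 2 ^ k, k + k', ?_⟩
    have h1 : ((2:ℚ) ^ k) ≠ 0 := by positivity
    have h2 : ((2:ℚ) ^ k') ≠ 0 := by positivity
    push_cast
    rw [div_add_div _ _ h1 h2, pow_add, div_eq_div_iff (by positivity) (by positivity)]
    ring
  neg_mem' := by
    rintro a ⟨n, k, rfl⟩
    exact ⟨-n, k, by push_cast; ring⟩
  mul_mem' := by
    rintro a b ⟨n, k, rfl⟩ ⟨n', k', rfl⟩
    refine ⟨n * n', k + k', ?_⟩
    have h1 : ((2:ℚ) ^ k) ≠ 0 := by positivity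
    have h2 : ((2:ℚ) ^ k') ≠ 0 := by positivity
    push_cast
    rw [div_mul_div_comm, pow_add]

lemma DyadicQ_le_Sdy : DyadicQ ≤ Sdy := by
  rw [DyadicQ, Subring.closure_le]
  rintro q rfl
  exact ⟨1, 1, by norm_num⟩

lemma pow2_one_val : ((pow2 1 : DyadicQ) : ℚ) = 2 := rfl

lemma pow2_neg_one_val : ((pow2 (-1) : DyadicQ) : ℚ) = (2:ℚ)⁻¹ := by
  rw [pow2, zpow_neg, zpow_one]; rfl

lemma pow2_val (m : ℤ) : ((pow2 m : DyadicQ) : ℚ) = (2:ℚ) ^ m := by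
  induction m using Int.induction_on with
  | zero => simp [pow2_zero]
  | succ k ih =>
      have : pow2 (k + 1) = pow2 k * pow2 1 := pow2_add k 1
      rw [this]
      push_cast [ih, pow2_one_val]
      rw [zpow_add₀ (by norm_num : (2:ℚ) ≠ 0)]
      norm_num
  | pred k ih =>
      have : pow2 (-k - 1) = pow2 (-k) * pow2 (-1) := by
        rw [← pow2_add]; ring_nf
      rw [this]
      push_cast [ih, pow2_neg_one_val]
      rw [show (-(k:ℤ) - 1) = -k + (-1) by ring,
        zpow_add₀ (by norm_num : (2:ℚ) ≠ 0)]
      norm_num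

lemma mersenne_dvd_iff (m : ℕ) (hm : 1 ≤ m) (s : ℕ) :
    ((2 ^ m - 1 : ℤ) ∣ 2 ^ s - 1 ↔ m ∣ s) := by
  induction s using Nat.strong_induction_on with
  | _ s ih =>
    rcases lt_or_ge s m with h | h
    · constructor
      · intro hd
        have h0 : (2:ℤ) ^ s - 1 = 0 := by
          refine Int.eq_zero_of_abs_lt_dvd hd ?_
          have h1 : (1:ℤ) ≤ 2 ^ s := one_le_pow₀ (by norm_num)
          have h2 : (2:ℤ) ^ s < 2 ^ m := by
            exact pow_lt_pow_right₀ (by norm_num) h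
          rw [abs_of_nonneg (by linarith)]
          linarith
        have hs0 : s = 0 := by
          by_contra hs
          have : (2:ℤ) ^ 1 ≤ 2 ^ s :=
            pow_le_pow_right₀ (by norm_num) (by omega)
          simp at this
          linarith
        simp [hs0]
      · intro hd
        have : s = 0 := Nat.eq_zero_of_dvd_of_lt hd h
        simp [this]
    · have e : (2:ℤ) ^ s - 1 = 2 ^ (s - m) * (2 ^ m - 1) + (2 ^ (s - m) - 1) := by
        have h2 : (2:ℤ) ^ (s - m) * 2 ^ m = 2 ^ s := by
          rw [← pow_add, Nat.sub_add_cancel h]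
        linear_combination -h2
      rw [e, dvd_add_right (Dvd.intro_left _ rfl), ih (s - m) (by omega)]
      constructor
      · intro hd
        have := Nat.dvd_add hd (dvd_refl m)
        rwa [Nat.sub_add_cancel h] at this
      · intro hd
        exact Nat.dvd_sub hd dvd_rfl

theorem stmt4 (m : ℤ) (hm : 1 ≤ m) (s : ℕ) :
    (conjH ⟨0, m⟩ ⟨((2 ^ s - 1 : ℤ) : DyadicQ), m⟩ ↔ (2 ^ m.toNat - 1 : ℤ) ∣ 2 ^ s - 1) ∧
    ((2 ^ m.toNat - 1 : ℤ) ∣ 2 ^ s - 1 ↔ m ∣ (s : ℤ)) := by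
  have hMm : (m.toNat : ℤ) = m := Int.toNat_of_nonneg (by omega)
  have hM1 : 1 ≤ m.toNat := by omega
  have h2M : ∀ k : ℤ, (2:ℚ) ^ k ≠ 0 := fun k => zpow_ne_zero k (by norm_num)
  have hpowm : (2:ℚ) ^ m = (2:ℚ) ^ m.toNat := by
    rw [← zpow_natCast (2:ℚ) m.toNat, hMm]
  constructor
  · constructor
    · rintro ⟨z, hz⟩
      obtain ⟨c, k⟩ := z
      simp only [Hgrp.mul_def, Hgrp.inv_def, Hgrp.mk.injEq] at hz
      have hr := hz.1
      have hq : ((c:ℚ) + ((pow2 k : DyadicQ):ℚ) * 0)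
          + ((pow2 (k + m) : DyadicQ):ℚ) * (-(((pow2 (-k) : DyadicQ):ℚ) * (c:ℚ)))
          = (((2 ^ s - 1 : ℤ) : DyadicQ) : ℚ) := by
        have := congrArg (fun x : DyadicQ => (x : ℚ)) hr
        push_cast at this ⊢
        convert this using 2
      rw [pow2_val, pow2_val, pow2_val] at hq
      have hq' : (c:ℚ) * (1 - 2 ^ m.toNat) = (2:ℚ) ^ s - 1 := by
        have e1 : (2:ℚ) ^ (k + m) * (2:ℚ) ^ (-k) = (2:ℚ) ^ m := by
          rw [← zpow_add₀ (by norm_num : (2:ℚ) ≠ 0)]; ring_nf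
        have e2 : (((2 ^ s - 1 : ℤ) : DyadicQ) : ℚ) = (2:ℚ) ^ s - 1 := by norm_cast
        rw [e2] at hq
        rw [← hpowm]
        linear_combination hq + (c:ℚ) * e1
      obtain ⟨n, j, hc⟩ := DyadicQ_le_Sdy c.2
      rw [hc] at hq'
      have hZ : (n:ℚ) * (1 - 2 ^ m.toNat) = 2 ^ j * ((2:ℚ) ^ s - 1) := by
        have h2j : ((2:ℚ) ^ j) ≠ 0 := by positivity
        field_simp at hq'
        linear_combination hq'
      have hZint : (n : ℤ) * (1 - 2 ^ m.toNat) = 2 ^ j * ((2:ℤ) ^ s - 1) := by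
        exact_mod_cast hZ
      have hdd : (2 ^ m.toNat - 1 : ℤ) ∣ ((2:ℤ) ^ s - 1) * 2 ^ j :=
        ⟨-n, by linear_combination -hZint⟩
      have hnd : ¬ (2:ℤ) ∣ 2 ^ m.toNat - 1 := by
        intro hdv
        have h2 : (2:ℤ) ∣ 2 ^ m.toNat := dvd_pow_self 2 (by omega)
        omega
      have hcop : IsCoprime (2 ^ m.toNat - 1 : ℤ) ((2:ℤ) ^ j) :=
        Int.prime_two.irreducible.coprime_pow_of_not_dvd j hnd
      exact hcop.dvd_of_dvd_mul_right hdd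
    · intro hd
      obtain ⟨d, hdd⟩ := hd
      refine ⟨⟨((-d : ℤ) : DyadicQ), 0⟩, ?_⟩
      simp only [Hgrp.mul_def, Hgrp.inv_def, Hgrp.mk.injEq]
      constructor
      · apply Subtype.ext
        have e2 : (((2 ^ s - 1 : ℤ) : DyadicQ) : ℚ) = (2:ℚ) ^ s - 1 := by norm_cast
        rw [e2]
        push_cast [pow2_val]
        simp only [neg_zero, zero_add, zpow_zero, hpowm]
        have h3 : ((2:ℚ) ^ s - 1) = (2 ^ m.toNat - 1) * (d:ℚ) := by exact_mod_cast hdd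
        linear_combination -h3
      · ring
  · rw [mersenne_dvd_iff m.toNat hM1 s, ← Int.natCast_dvd_natCast, hMm]
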